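/- Let q be a prime power and k ≥ 2 a divisor of q−1. If θ is a near-linear cyclotomic orthomorphism of index k over F_q, then θ has least index k, i.e. θ ∈ 𝒟_k(q). -/

import Mathlib

/-- An orthomorphism over a finite field: a permutation `θ` such that
`x ↦ θ x - x` is also a permutation. -/
def IsOrthomorphism {F : Type*} [Field F] [Fintype F] (θ : F → F) : Prop :=
  Function.Bijective θ ∧ Function.Bijective (fun x => θ x - x)

/-- `θ ∈ 𝒞_k(q)`: a cyclotomic orthomorphism of index `k`, i.e. an orthomorphism
with `θ 0 = 0` such that `θ(x)/x` is constant on cosets of the unique subgroup of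
index `k` of `Fˣ` (which, for `k ∣ q - 1`, is the set of nonzero `k`-th powers). -/
def IsCycOrthomorphism {F : Type*} [Field F] [Fintype F] (k : ℕ) (θ : F → F) : Prop :=
  IsOrthomorphism θ ∧ θ 0 = 0 ∧
    ∀ x y : F, x ≠ 0 → y ≠ 0 → (∃ z : F, x = z ^ k * y) → θ x * y = θ y * x

/-- `θ ∈ 𝒟_k(q)`: a cyclotomic orthomorphism of least index `k`. -/
def IsLeastCycOrthomorphism {F : Type*} [Field F] [Fintype F] (k : ℕ) (θ : F → F) : Prop :=
  IsCycOrthomorphism k θ ∧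
    ∀ ℓ : ℕ, ℓ < k → ℓ ∣ Fintype.card F - 1 → ¬ IsCycOrthomorphism ℓ θ

/-- Lemma 2.3.  A near-linear cyclotomic orthomorphism of index `k ≥ 2`
(multiplier `a₀` on the class `C_{k,0}` of nonzero `k`-th powers, and common
multiplier `a₁ = a₂ = ⋯ = a_{k-1}` on all other classes, with `a₀ ≠ a₁`)
has least index `k`, i.e. lies in `𝒟_k(q)`. -/
theorem lemma_nearlinDk {F : Type*} [Field F] [Fintype F]
    (k : ℕ) (hk : 2 ≤ k) (hdvd : k ∣ Fintype.card F - 1)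
    (a₀ a₁ : F) (hne : a₀ ≠ a₁) (θ : F → F)
    (hθ0 : θ 0 = 0)
    (hθa : ∀ x : F, x ≠ 0 → (∃ z : F, x = z ^ k) → θ x = a₀ * x)
    (hθb : ∀ x : F, x ≠ 0 → ¬ (∃ z : F, x = z ^ k) → θ x = a₁ * x)
    (horth : IsOrthomorphism θ) :
    IsLeastCycOrthomorphism k θ := by
  constructor
  · refine ⟨horth, hθ0, ?_⟩
    rintro x y hx hy ⟨z, hz⟩
    have hz0 : z ≠ 0 := by
      rintro rfl; rw [zero_pow (by omega : k ≠ 0), zero_mul] at hz; exact hx hz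
    by_cases hy' : ∃ w : F, y = w ^ k
    · obtain ⟨w, rfl⟩ := hy'
      rw [hθa x hx ⟨z * w, by rw [hz, mul_pow]⟩, hθa _ hy ⟨w, rfl⟩, hz]; ring
    · have hx' : ¬ ∃ w : F, x = w ^ k := by
        rintro ⟨w, hw⟩
        refine hy' ⟨w / z, ?_⟩
        rw [div_pow, eq_div_iff (pow_ne_zero _ hz0)]
        rw [← hw, hz]; ring
      rw [hθb x hx hx', hθb y hy hy', hz]; ring
  · intro ℓ hℓk hℓdvd hcyc
    have hcard : 1 ≤ Fintype.card F - 1 := by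
      have := Fintype.one_lt_card (α := F); omega
    have hℓ0 : ℓ ≠ 0 := by rintro rfl; rw [Nat.zero_dvd] at hℓdvd; omega
    obtain ⟨g, hg⟩ := IsCyclic.exists_generator (α := Fˣ)
    have hgo : orderOf g = Fintype.card F - 1 := by
      rw [orderOf_eq_card_of_forall_mem_zpowers hg]
      rw [Nat.card_units, Nat.card_eq_fintype_card]
    set x : F := (g : F) ^ ℓ with hxdef
    have hx0 : x ≠ 0 := pow_ne_zero _ (Units.ne_zero g)
    have hxnk : ¬ ∃ z : F, x = z ^ k := by
      rintro ⟨z, hzx⟩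
      have hz0 : z ≠ 0 := by
        rintro rfl; rw [zero_pow (by omega : k ≠ 0)] at hzx; exact hx0 hzx
      obtain ⟨m, hm⟩ := hg (Units.mk0 z hz0)
      have hm' : g ^ m = Units.mk0 z hz0 := hm
      have hu : g ^ ℓ = (Units.mk0 z hz0) ^ k :=
        Units.ext (by simpa [Units.val_pow_eq_pow_val] using hzx)
      rw [← hm'] at hu
      have hu2 : g ^ (ℓ : ℤ) = g ^ (m * (k : ℤ)) := by
        rw [zpow_natCast, zpow_mul, zpow_natCast]; exact hu
      have h1 : g ^ ((ℓ : ℤ) - m * (k : ℤ)) = 1 := by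
        simp [zpow_sub, hu2]
      have hdvd1 : ((Fintype.card F - 1 : ℕ) : ℤ) ∣ (ℓ : ℤ) - m * (k : ℤ) := by
        rw [← hgo]; exact orderOf_dvd_iff_zpow_eq_one.mpr h1
      have hkdvd : (k : ℤ) ∣ (ℓ : ℤ) := by
        have h2 : (k : ℤ) ∣ (ℓ : ℤ) - m * (k : ℤ) :=
          dvd_trans (Int.natCast_dvd_natCast.mpr hdvd) hdvd1
        have := dvd_add h2 (dvd_mul_left (k : ℤ) m)
        simpa using this
      have := Int.natCast_dvd_natCast.mp hkdvd
      have := Nat.le_of_dvd (by omega) this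
      omega
    have hrel := hcyc.2.2 x 1 hx0 one_ne_zero ⟨g, by rw [hxdef, mul_one]⟩
    rw [hθb x hx0 hxnk, hθa 1 one_ne_zero ⟨1, (one_pow k).symm⟩, mul_one, mul_one] at hrel
    exact hne (mul_right_cancel₀ hx0 hrel.symm)
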